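/- Let β ∈ F_{q^n} be a normal element over F_q and let f ∈ F_q[x] be a monic divisor of x^n - 1 of degree k. Then α = f ∘ β is a k-normal element of F_{q^n} over F_q, i.e., gcd(x^n - 1, g_α(x)) has degree k, where g_α(x) = Σ_{i=0}^{n-1} α^{q^i} x^{n-1-i}. -/

import Mathlib

open scoped Classical

/-- The `𝔽_q[x]`-module action on `L`: `f ∘ β = ∑ aᵢ β^(q^i)`. -/
noncomputable def polyAct (q : ℕ) {K L : Type*} [Field K] [Field L] [Algebra K L]
    (f : Polynomial K) (β : L) : L :=
  ∑ i ∈ Finset.range (f.natDegree + 1), f.coeff i • β ^ q ^ i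

open Polynomial Finset in
noncomputable def Gp (q n : ℕ) {L : Type*} [Field L] (γ : L) : Polynomial L :=
  ∑ i ∈ Finset.range n, Polynomial.C (γ ^ q ^ i) * Polynomial.X ^ (n - 1 - i)

open Polynomial Finset in
lemma Gp_step {q n : ℕ} {L : Type*} [Field L] (hn : 0 < n)
    (hL : ∀ x : L, x ^ q ^ n = x) (γ : L) :
    X * Gp q n γ - Gp q n (γ ^ q) = C γ * (X ^ n - 1) := by
  obtain ⟨m, rfl⟩ : ∃ m, n = m + 1 := ⟨n - 1, by omega⟩
  unfold Gp
  rw [Finset.mul_sum]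
  rw [Finset.sum_range_succ' (fun i => X * (C (γ ^ q ^ i) * X ^ (m + 1 - 1 - i))) m]
  rw [Finset.sum_range_succ (fun i => C ((γ ^ q) ^ q ^ i) * X ^ (m + 1 - 1 - i))]
  have key : ∀ i : ℕ, (γ ^ q) ^ q ^ i = γ ^ q ^ (i + 1) := by
    intro i; rw [← pow_mul, ← pow_succ']
  have h1 : ∀ i ∈ Finset.range m,
      X * (C (γ ^ q ^ (i + 1)) * X ^ (m + 1 - 1 - (i + 1)))
        = C ((γ ^ q) ^ q ^ i) * X ^ (m + 1 - 1 - i) := by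
    intro i hi
    rw [key i]
    have : m + 1 - 1 - i = (m + 1 - 1 - (i + 1)) + 1 := by
      simp only [Finset.mem_range] at hi; omega
    rw [this, pow_succ]
    ring
  rw [Finset.sum_congr rfl h1]
  rw [key m]
  rw [hL γ]
  simp only [Nat.add_sub_cancel, Nat.sub_self, pow_zero]
  ring_nf
  rw [Nat.sub_zero]
  ring

open Polynomial Finset in
lemma Gp_pow {q n : ℕ} {L : Type*} [Field L] (hn : 0 < n)
    (hL : ∀ x : L, x ^ q ^ n = x) (γ : L) (j : ℕ) :
    (X ^ n - 1 : Polynomial L) ∣ X ^ j * Gp q n γ - Gp q n (γ ^ q ^ j) := by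
  induction j with
  | zero => simp
  | succ j ih =>
      have hsplit : X ^ (j+1) * Gp q n γ - Gp q n (γ ^ q ^ (j+1))
          = X * (X ^ j * Gp q n γ - Gp q n (γ ^ q ^ j))
            + (X * Gp q n (γ ^ q ^ j) - Gp q n ((γ ^ q ^ j) ^ q)) := by
        rw [← pow_mul, ← pow_succ]
        ring
      rw [hsplit]
      exact dvd_add (Dvd.dvd.mul_left ih X) ⟨C (γ ^ q ^ j), by rw [Gp_step hn hL _, mul_comm]⟩

open Polynomial Finset in
theorem stmt4 (q n k : ℕ) (hq : 1 < q) (hn : 0 < n)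
    (K : Type*) [Field K] [Fintype K] (hK : Fintype.card K = q)
    (L : Type*) [Field L] [Fintype L] [Algebra K L]
    (hrank : Module.finrank K L = n)
    (β : L) (b : Module.Basis (Fin n) K L) (hb : ∀ i : Fin n, b i = β ^ q ^ (i : ℕ))
    (f : Polynomial K) (hmonic : f.Monic) (hdvd : f ∣ Polynomial.X ^ n - 1)
    (hdeg : f.natDegree = k) :
    (EuclideanDomain.gcd (Polynomial.X ^ n - 1 : Polynomial L)
      (∑ i ∈ Finset.range n,
        Polynomial.C ((polyAct q f β) ^ q ^ i) * Polynomial.X ^ (n - 1 - i))).natDegree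
      = k := by
  classical
  change (EuclideanDomain.gcd (X ^ n - 1 : Polynomial L)
    (Gp q n (polyAct q f β))).natDegree = k
  set p := ringChar K with hpdef
  obtain ⟨e, hp, hqe⟩ := FiniteField.card K p
  haveI : Fact p.Prime := ⟨hp⟩
  haveI : CharP L p := charP_of_injective_algebraMap (algebraMap K L).injective p
  have hqpe : q = p ^ (e : ℕ) := by rw [← hK]; exact hqe
  have hcardL : Fintype.card L = q ^ n := by
    rw [Module.card_fintype b, hK, Fintype.card_fin]
  have hLpow : ∀ x : L, x ^ q ^ n = x := fun x => by
    rw [← hcardL]; exact FiniteField.pow_card x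
  have hfrobadd : ∀ (m : ℕ) (x y : L), (x + y) ^ q ^ m = x ^ q ^ m + y ^ q ^ m := by
    intro m x y
    rw [hqpe, ← pow_mul]
    exact add_pow_char_pow x y p (e * m)
  have hsum_pow : ∀ {ι : Type} (s : Finset ι) (g : ι → L) (m : ℕ),
      (∑ x ∈ s, g x) ^ q ^ m = ∑ x ∈ s, g x ^ q ^ m := by
    intro ι s g m
    induction s using Finset.induction with
    | empty => simp [zero_pow (pow_ne_zero m (by omega : q ≠ 0))]
    | insert _ _ h ih =>
        rw [Finset.sum_insert h, Finset.sum_insert h, hfrobadd, ih]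
  have hKfix : ∀ (c : K) (m : ℕ), (algebraMap K L c) ^ q ^ m = algebraMap K L c := by
    intro c m
    rw [← map_pow]
    congr 1
    rw [← hK]
    exact FiniteField.pow_card_pow m c
  have hsmul_pow : ∀ (c : K) (x : L) (m : ℕ), (c • x) ^ q ^ m = c • x ^ q ^ m := by
    intro c x m
    rw [Algebra.smul_def, Algebra.smul_def, mul_pow, hKfix]
  set P : Polynomial L := X ^ n - 1 with hP
  set Gβ := Gp q n β with hGβ
  set α := polyAct q f β with hα
  have hPn : P.natDegree = n := by rw [hP, ← C_1]; exact natDegree_X_pow_sub_C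
  have hPne : P ≠ 0 := by
    intro h0
    rw [h0, natDegree_zero] at hPn
    omega
  -- distinctness of Frobenius powers
  have hdistinct : ∀ i j : ℕ, i < n → j < n → i < j →
      ¬ (∀ x : L, x ^ q ^ i = x ^ q ^ j) := by
    intro i j hi hj hij hall
    obtain ⟨g, hg⟩ := IsCyclic.exists_generator (α := Lˣ)
    have horder : orderOf g = q ^ n - 1 := by
      rw [orderOf_eq_card_of_forall_mem_zpowers hg, Nat.card_eq_fintype_card,
        Fintype.card_units, hcardL]
    have hlt : q ^ i < q ^ j := Nat.pow_lt_pow_right hq hij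
    have hgne : ((g : L)) ^ q ^ i ≠ 0 := pow_ne_zero _ (Units.ne_zero g)
    have hgl : (g : L) ^ (q ^ j - q ^ i) = 1 := by
      have h1 : (g : L) ^ q ^ j = (g : L) ^ q ^ i * (g : L) ^ (q ^ j - q ^ i) := by
        rw [← pow_add]
        congr 1
        omega
      have h2 := (hall (g : L)).symm
      rw [h1] at h2
      have h3 : ((g : L)) ^ q ^ i * (g : L) ^ (q ^ j - q ^ i)
          = ((g : L)) ^ q ^ i * 1 := by rw [mul_one, h2]
      exact mul_left_cancel₀ hgne h3
    have hgu : g ^ (q ^ j - q ^ i) = 1 := by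
      apply Units.ext
      rw [Units.val_pow_eq_pow_val, hgl, Units.val_one]
    have hdvd2 := orderOf_dvd_of_pow_eq_one hgu
    rw [horder] at hdvd2
    have hjn : q ^ j < q ^ n := Nat.pow_lt_pow_right hq hj
    have hposi : 0 < q ^ i := Nat.pow_pos (by omega)
    have hle := Nat.le_of_dvd (by omega) hdvd2
    omega
  -- key lemma: low-degree multiples of Gβ killed by P are zero
  have hzero : ∀ h : Polynomial L, h.natDegree < n → P ∣ h * Gβ → h = 0 := by
    intro h hhdeg hhdvd
    set c : ℕ → L := fun j => h.coeff j with hc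
    set w : ℕ → L := fun i => ∑ j ∈ Finset.range n, c j * (β ^ q ^ i) ^ q ^ j with hw
    set S : Polynomial L := ∑ j ∈ Finset.range n, C (c j) * Gp q n (β ^ q ^ j) with hS
    have hhrep : h = ∑ j ∈ Finset.range n, C (c j) * X ^ j := by
      conv_lhs => rw [h.as_sum_range' n hhdeg]
      exact Finset.sum_congr rfl fun j _ => (C_mul_X_pow_eq_monomial).symm
    have hdvdS : P ∣ S := by
      have h1 : P ∣ h * Gβ - S := by
        rw [hhrep, Finset.sum_mul, hS, ← Finset.sum_sub_distrib]
        apply Finset.dvd_sum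
        intro j _
        have heq : C (c j) * X ^ j * Gβ - C (c j) * Gp q n (β ^ q ^ j)
            = C (c j) * (X ^ j * Gp q n β - Gp q n (β ^ q ^ j)) := by
          rw [hGβ]; ring
        rw [heq]
        exact Dvd.dvd.mul_left (Gp_pow hn hLpow β j) _
      have h2 := dvd_sub hhdvd h1
      simpa using h2
    have hSrep : S = ∑ i ∈ Finset.range n, C (w i) * X ^ (n - 1 - i) := by
      rw [hS]
      simp only [Gp, Finset.mul_sum]
      rw [Finset.sum_comm]
      refine Finset.sum_congr rfl fun i _ => ?_
      rw [hw]
      simp only []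
      rw [map_sum, Finset.sum_mul]
      refine Finset.sum_congr rfl fun j _ => ?_
      rw [show (β ^ q ^ j) ^ q ^ i = (β ^ q ^ i) ^ q ^ j by
        rw [← pow_mul, ← pow_mul, mul_comm]]
      rw [map_mul]
      ring
    have hSdeg : S.natDegree ≤ n - 1 := by
      rw [hSrep]
      apply natDegree_sum_le_of_forall_le
      intro i _
      refine natDegree_mul_le.trans ?_
      simp only [natDegree_C, natDegree_X_pow, zero_add]
      omega
    have hS0 : S = 0 := by
      by_contra hS0
      have := Polynomial.natDegree_le_of_dvd hdvdS hS0
      rw [hPn] at this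
      omega
    have hw0 : ∀ i, i < n → w i = 0 := by
      intro i hi
      have h0 : (∑ i' ∈ Finset.range n, C (w i') * X ^ (n - 1 - i')).coeff (n - 1 - i) = 0 := by
        rw [← hSrep, hS0, coeff_zero]
      rw [finset_sum_coeff] at h0
      rw [Finset.sum_eq_single i] at h0
      · simpa [coeff_C_mul, coeff_X_pow] using h0
      · intro i' hi' hne
        simp only [Finset.mem_range] at hi'
        rw [coeff_C_mul, coeff_X_pow, if_neg (by omega), mul_zero]
      · intro habs
        exact absurd (Finset.mem_range.mpr hi) habs
    have hψ : ∀ x : L, ∑ j ∈ Finset.range n, c j * x ^ q ^ j = 0 := by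
      intro x
      have hx := Module.Basis.sum_repr b x
      calc ∑ j ∈ Finset.range n, c j * x ^ q ^ j
          = ∑ j ∈ Finset.range n, c j * (∑ i : Fin n, b.repr x i • b i) ^ q ^ j := by
            rw [hx]
        _ = ∑ j ∈ Finset.range n, ∑ i : Fin n, b.repr x i • (c j * (b i) ^ q ^ j) := by
            refine Finset.sum_congr rfl fun j _ => ?_
            rw [hsum_pow, Finset.mul_sum]
            refine Finset.sum_congr rfl fun i _ => ?_
            rw [hsmul_pow, mul_smul_comm]
        _ = ∑ i : Fin n, b.repr x i • (∑ j ∈ Finset.range n, c j * (b i) ^ q ^ j) := by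
            rw [Finset.sum_comm]
            exact Finset.sum_congr rfl fun i _ => (Finset.smul_sum).symm
        _ = 0 := by
            refine Finset.sum_eq_zero fun i _ => ?_
            rw [hb i]
            have := hw0 (i : ℕ) i.isLt
            rw [hw] at this
            simp only [] at this
            rw [this, smul_zero]
    have hc0 : ∀ j, j < n → c j = 0 := by
      set μ : Fin n → (L →* L) := fun j => powMonoidHom (q ^ (j : ℕ)) with hμ
      have hμinj : Function.Injective μ := by
        intro i j hij
        by_contra hne
        have hvne : (i : ℕ) ≠ (j : ℕ) := fun hh => hne (Fin.ext hh)
        have hfun : ∀ x : L, x ^ q ^ (i : ℕ) = x ^ q ^ (j : ℕ) := by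
          intro x
          have := DFunLike.congr_fun hij x
          simpa [hμ, powMonoidHom_apply] using this
        rcases hvne.lt_or_gt with hlt | hlt
        · exact hdistinct _ _ i.isLt j.isLt hlt hfun
        · exact hdistinct _ _ j.isLt i.isLt hlt (fun x => (hfun x).symm)
      have li := (linearIndependent_monoidHom L L).comp μ hμinj
      have hsum0 : (∑ j : Fin n, c (j : ℕ) • ((fun f : L →* L => (f : L → L)) ∘ μ) j) = 0 := by
        funext x
        simp only [Finset.sum_apply, Pi.smul_apply, Function.comp_apply, Pi.zero_apply,
          smul_eq_mul, hμ, powMonoidHom_apply]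
        rw [← hψ x, Finset.sum_range (fun j => c j * x ^ q ^ j)]
      have hall := Fintype.linearIndependent_iff.mp li (fun j => c (j : ℕ)) hsum0
      intro j hj
      exact hall ⟨j, hj⟩
    apply Polynomial.ext
    intro mm
    rw [coeff_zero]
    rcases lt_or_ge mm n with hmm | hmm
    · exact hc0 mm hmm
    · exact coeff_eq_zero_of_natDegree_lt (lt_of_lt_of_le hhdeg hmm)
  -- coprimality of P and Gβ
  have hcop : IsCoprime P Gβ := by
    rw [← EuclideanDomain.gcd_isUnit_iff]
    set d := EuclideanDomain.gcd P Gβ with hd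
    have hdP : d ∣ P := EuclideanDomain.gcd_dvd_left P Gβ
    have hdG : d ∣ Gβ := EuclideanDomain.gcd_dvd_right P Gβ
    by_contra hnd
    have hdne : d ≠ 0 := by
      intro h0
      rw [hd] at h0
      exact hPne (EuclideanDomain.gcd_eq_zero_iff.mp h0).1
    obtain ⟨m0, hm0⟩ := hdP
    have hm0ne : m0 ≠ 0 := by
      rintro rfl
      rw [mul_zero] at hm0
      exact hPne hm0
    have hddeg : 0 < d.natDegree := by
      rcases Nat.eq_zero_or_pos d.natDegree with h0 | hpos
      · exfalso
        apply hnd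
        apply Polynomial.isUnit_iff_degree_eq_zero.mpr
        rw [degree_eq_natDegree hdne, h0]
        rfl
      · exact hpos
    have hmdeg : m0.natDegree < n := by
      have hmul := natDegree_mul hdne hm0ne
      rw [← hm0, hPn] at hmul
      omega
    obtain ⟨s, hs⟩ := hdG
    have hPdvd : P ∣ m0 * Gβ := ⟨s, by rw [hm0, hs]; ring⟩
    exact hm0ne (hzero m0 hmdeg hPdvd)
  -- expansion of G(α)
  have hexp : ∀ i : ℕ, α ^ q ^ i
      = ∑ j ∈ Finset.range (f.natDegree + 1),
          algebraMap K L (f.coeff j) * (β ^ q ^ j) ^ q ^ i := by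
    intro i
    rw [hα]
    unfold polyAct
    rw [hsum_pow]
    refine Finset.sum_congr rfl fun j _ => ?_
    rw [hsmul_pow, Algebra.smul_def]
  have hGα : Gp q n α = ∑ j ∈ Finset.range (f.natDegree + 1),
      C (algebraMap K L (f.coeff j)) * Gp q n (β ^ q ^ j) := by
    simp only [Gp, Finset.mul_sum]
    rw [Finset.sum_comm]
    refine Finset.sum_congr rfl fun i _ => ?_
    rw [hexp i, map_sum, Finset.sum_mul]
    refine Finset.sum_congr rfl fun j _ => ?_
    rw [map_mul]
    ring
  have hFrep : f.map (algebraMap K L) = ∑ j ∈ Finset.range (f.natDegree + 1),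
      C (algebraMap K L (f.coeff j)) * X ^ j := by
    conv_lhs => rw [(f.map (algebraMap K L)).as_sum_range' (f.natDegree + 1)
      (by rw [natDegree_map]; omega)]
    refine Finset.sum_congr rfl fun j _ => ?_
    rw [← C_mul_X_pow_eq_monomial, coeff_map]
  set F := f.map (algebraMap K L) with hF
  have hcong : P ∣ Gp q n α - F * Gβ := by
    rw [hGα, hFrep, Finset.sum_mul, ← Finset.sum_sub_distrib]
    apply Finset.dvd_sum
    intro j _
    have heq : C (algebraMap K L (f.coeff j)) * Gp q n (β ^ q ^ j)
        - C (algebraMap K L (f.coeff j)) * X ^ j * Gβ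
        = -(C (algebraMap K L (f.coeff j)) * (X ^ j * Gp q n β - Gp q n (β ^ q ^ j))) := by
      rw [hGβ]; ring
    rw [heq]
    exact (Dvd.dvd.mul_left (Gp_pow hn hLpow β j) _).neg_right
  have hFP : F ∣ P := by
    have h1 := Polynomial.map_dvd (algebraMap K L) hdvd
    rw [Polynomial.map_sub, Polynomial.map_pow, Polynomial.map_X, Polynomial.map_one] at h1
    exact h1
  have hFGα : F ∣ Gp q n α := by
    have h1 : F ∣ Gp q n α - F * Gβ := dvd_trans hFP hcong
    have h2 := dvd_add h1 (Dvd.intro Gβ rfl)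
    simpa using h2
  have hFd1 : F ∣ EuclideanDomain.gcd P (Gp q n α) :=
    EuclideanDomain.dvd_gcd hFP hFGα
  have hd1F : EuclideanDomain.gcd P (Gp q n α) ∣ F := by
    have h3 : EuclideanDomain.gcd P (Gp q n α) ∣ F * Gβ := by
      have h4 := dvd_sub (EuclideanDomain.gcd_dvd_right P (Gp q n α))
        (dvd_trans (EuclideanDomain.gcd_dvd_left P (Gp q n α)) hcong)
      simpa using h4
    exact (hcop.of_isCoprime_of_dvd_left (EuclideanDomain.gcd_dvd_left P (Gp q n α))).dvd_of_dvd_mul_right h3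
  have hassoc : Associated (EuclideanDomain.gcd P (Gp q n α)) F :=
    associated_of_dvd_dvd hd1F hFd1
  have hdegeq := Polynomial.natDegree_eq_of_degree_eq
    (Polynomial.degree_eq_degree_of_associated hassoc)
  rw [hP] at hdegeq
  rw [hdegeq, hF, natDegree_map, hdeg]
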